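/- Let U be positive definite and α ∈ ℝ^p with α_i > pa_i + 2 for every i. Define h : Θ_𝒟 → ℝ by h(D, L) = exp(−(1/2) tr(L D^{-1} Lᵀ U)) ∏_{i=1}^p D_{ii}^{−α_i/2}, and let (D*, L*) ∈ Θ_𝒟 be given by D*_{ii} = U_{ii|<i>}/α_i and L*_{<i|} = −(U_{<i>})^{-1} U_{<i|}. Then h(D, L) ≤ h(D*, L*) for every (D, L) ∈ Θ_𝒟; i.e., (D*, L*) is the mode of the (unnormalized) DAG-Wishart density. -/

import Mathlib

open MeasureTheory Matrix Real Finset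

noncomputable section

/-- Index type for the free coordinates of a lower triangular matrix `L ∈ ℒ_𝒟`:
a pair of a vertex `i` and a parent `j ∈ pa i`, standing for the entry `L j i`. -/
abbrev Edges {p : ℕ} (pa : Fin p → Finset (Fin p)) : Type := Σ i : Fin p, {j // j ∈ pa i}

/-- The matrix `L ∈ ℒ_𝒟` built from its free coordinates. -/
def mkL {p : ℕ} (pa : Fin p → Finset (Fin p)) (y : Edges pa → ℝ) :
    Matrix (Fin p) (Fin p) ℝ :=
  Matrix.of fun j i => if j = i then 1 else if h : j ∈ pa i then y ⟨i, j, h⟩ else 0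

/-- `A_{<i>}`, the `pa(i) × pa(i)` submatrix of `A`. -/
def sub2 {p : ℕ} (pa : Fin p → Finset (Fin p)) (A : Matrix (Fin p) (Fin p) ℝ) (i : Fin p) :
    Matrix {j // j ∈ pa i} {j // j ∈ pa i} ℝ :=
  A.submatrix (fun j => j.1) (fun j => j.1)

/-- `A_{<i|}`, the column vector `(A_{ji})_{j ∈ pa(i)}`. -/
def colv {p : ℕ} (pa : Fin p → Finset (Fin p)) (A : Matrix (Fin p) (Fin p) ℝ) (i : Fin p) :
    {j // j ∈ pa i} → ℝ :=
  fun j => A j.1 i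

/-- `A_{[i>}`, the row vector `(A_{ij})_{j ∈ pa(i)}`. -/
def rowv {p : ℕ} (pa : Fin p → Finset (Fin p)) (A : Matrix (Fin p) (Fin p) ℝ) (i : Fin p) :
    {j // j ∈ pa i} → ℝ :=
  fun j => A i j.1

/-- `A_{≤i≥}`, the `fa(i) × fa(i)` submatrix of `A`. -/
def subFam {p : ℕ} (pa : Fin p → Finset (Fin p)) (A : Matrix (Fin p) (Fin p) ℝ) (i : Fin p) :
    Matrix {j // j ∈ insert i (pa i)} {j // j ∈ insert i (pa i)} ℝ :=
  A.submatrix (fun j => j.1) (fun j => j.1)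

/-- `A_{ii|<i>} = A_{ii} - A_{[i>} (A_{<i>})⁻¹ A_{<i|}` (equal to `A_{ii}` when `pa(i) = ∅`). -/
def condVar {p : ℕ} (pa : Fin p → Finset (Fin p)) (A : Matrix (Fin p) (Fin p) ℝ) (i : Fin p) :
    ℝ :=
  A i i - rowv pa A i ⬝ᵥ ((sub2 pa A i)⁻¹ *ᵥ colv pa A i)

/-- The normalizing constant `z_𝒟(U, α)`. -/
def zD {p : ℕ} (pa : Fin p → Finset (Fin p)) (U : Matrix (Fin p) (Fin p) ℝ)
    (α : Fin p → ℝ) : ℝ :=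
  ∏ i : Fin p,
    Real.Gamma (α i / 2 - ((pa i).card : ℝ) / 2 - 1) * (2 : ℝ) ^ (α i / 2 - 1) *
        Real.pi ^ (((pa i).card : ℝ) / 2) *
        (sub2 pa U i).det ^ (α i / 2 - ((pa i).card : ℝ) / 2 - 3 / 2) /
      (subFam pa U i).det ^ (α i / 2 - ((pa i).card : ℝ) / 2 - 1)

/-- The unnormalized DAG-Wishart density on the Cholesky space `Θ_𝒟`. -/
def dagDensity {p : ℕ} (pa : Fin p → Finset (Fin p)) (U : Matrix (Fin p) (Fin p) ℝ)
    (α : Fin p → ℝ) (d : Fin p → ℝ) (L : Matrix (Fin p) (Fin p) ℝ) : ℝ :=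
  Real.exp (-(1 / 2) * ((L * Matrix.diagonal (fun i => (d i)⁻¹) * Lᵀ) * U).trace) *
    ∏ i : Fin p, d i ^ (-(α i) / 2)

/-- The Cholesky space `Θ_𝒟` in free coordinates: diagonal coordinates positive. -/
def thetaSet {p : ℕ} (pa : Fin p → Finset (Fin p)) :
    Set ((Fin p → ℝ) × (Edges pa → ℝ)) :=
  {x | ∀ i, 0 < x.1 i}

/-- The DAG-Wishart distribution `π_{U,α}^{Θ_𝒟}` as a measure on the free coordinates. -/
def dagWishart {p : ℕ} (pa : Fin p → Finset (Fin p)) (U : Matrix (Fin p) (Fin p) ℝ)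
    (α : Fin p → ℝ) : Measure ((Fin p → ℝ) × (Edges pa → ℝ)) :=
  (volume.restrict (thetaSet pa)).withDensity
    (fun x => ENNReal.ofReal ((zD pa U α)⁻¹ * dagDensity pa U α x.1 (mkL pa x.2)))


section AuxLemmas

lemma sum_extend {n m : Type*} [Fintype n] [Fintype m] [DecidableEq n]
    (e : m → n) (he : Function.Injective e) (x : m → ℝ) (f : n → ℝ) :
    ∑ j, Function.extend e x 0 j * f j = ∑ i, x i * f (e i) := by
  calc ∑ j, Function.extend e x 0 j * f j
      = ∑ j ∈ Finset.image e Finset.univ, Function.extend e x 0 j * f j := by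
        refine (Finset.sum_subset (Finset.subset_univ _) ?_).symm
        intro j _ hj
        have : Function.extend e x 0 j = 0 := by
          apply Function.extend_apply'
          rintro ⟨i, rfl⟩
          exact hj (Finset.mem_image_of_mem e (Finset.mem_univ i))
        simp [this]
    _ = ∑ i, Function.extend e x 0 (e i) * f (e i) :=
        Finset.sum_image (by intro a _ b _ h; exact he h)
    _ = ∑ i, x i * f (e i) := by simp [he.extend_apply]

lemma posDef_submatrix_inj {n m : Type*} [Fintype n] [Fintype m] [DecidableEq n] [DecidableEq m]
    {M : Matrix n n ℝ} (hM : M.PosDef) (e : m → n) (he : Function.Injective e) :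
    (M.submatrix e e).PosDef := by
  refine Matrix.PosDef.of_dotProduct_mulVec_pos ?_ ?_
  · have h1 := hM.1
    rw [Matrix.IsHermitian] at *
    rw [Matrix.conjTranspose_submatrix, h1]
  · intro x hx
    set y : n → ℝ := Function.extend e x 0 with hy
    have hyne : y ≠ 0 := by
      intro h0
      apply hx
      funext i
      have := congrFun h0 (e i)
      rwa [hy, he.extend_apply] at this
    have hpos := hM.dotProduct_mulVec_pos hyne
    have key : dotProduct (star y) (M *ᵥ y) = dotProduct (star x) ((M.submatrix e e) *ᵥ x) := by
      simp only [star_trivial, dotProduct, Matrix.mulVec, Matrix.submatrix_apply]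
      rw [sum_extend e he x]
      refine Finset.sum_congr rfl fun i _ => ?_
      congr 1
      rw [show ∑ j, M (e i) j * y j = ∑ j, y j * M (e i) j from
        Finset.sum_congr rfl fun j _ => mul_comm _ _]
      rw [sum_extend e he x]
      exact Finset.sum_congr rfl fun j _ => mul_comm _ _
    rwa [key] at hpos

lemma quad_expand {n : Type*} [Fintype n] [DecidableEq n]
    {A : Matrix n n ℝ} (hA : A.PosDef) (b y : n → ℝ) :
    -(b ⬝ᵥ A⁻¹ *ᵥ b) ≤ y ⬝ᵥ A *ᵥ y + 2 * (b ⬝ᵥ y) := by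
  have hdet : IsUnit A.det := isUnit_iff_ne_zero.mpr hA.det_pos.ne'
  have hAinv : A *ᵥ (A⁻¹ *ᵥ b) = b := by
    rw [Matrix.mulVec_mulVec, Matrix.mul_nonsing_inv A hdet, Matrix.one_mulVec]
  have hsymm : Aᵀ = A := hA.1
  set w : n → ℝ := y + A⁻¹ *ᵥ b with hw
  have hpos : 0 ≤ w ⬝ᵥ A *ᵥ w := hA.posSemidef.dotProduct_mulVec_nonneg w
  have hexp : w ⬝ᵥ A *ᵥ w = y ⬝ᵥ A *ᵥ y + 2 * (b ⬝ᵥ y) + b ⬝ᵥ A⁻¹ *ᵥ b := by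
    have h1 : (A⁻¹ *ᵥ b) ⬝ᵥ A *ᵥ y = b ⬝ᵥ y := by
      rw [Matrix.dotProduct_mulVec, ← Matrix.mulVec_transpose, hsymm, hAinv]
    have h2 : y ⬝ᵥ A *ᵥ (A⁻¹ *ᵥ b) = b ⬝ᵥ y := by
      rw [hAinv, dotProduct_comm]
    have h3 : (A⁻¹ *ᵥ b) ⬝ᵥ A *ᵥ (A⁻¹ *ᵥ b) = b ⬝ᵥ A⁻¹ *ᵥ b := by
      rw [hAinv, dotProduct_comm]
    rw [hw, Matrix.mulVec_add, add_dotProduct, dotProduct_add,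
      dotProduct_add, h1, h2, h3]
    ring
  linarith [hpos, hexp.le]

lemma quad_eq {n : Type*} [Fintype n] [DecidableEq n]
    {A : Matrix n n ℝ} (hA : A.PosDef) (b : n → ℝ) :
    (-(A⁻¹ *ᵥ b)) ⬝ᵥ A *ᵥ (-(A⁻¹ *ᵥ b)) + 2 * (b ⬝ᵥ (-(A⁻¹ *ᵥ b))) = -(b ⬝ᵥ A⁻¹ *ᵥ b) := by
  have hdet : IsUnit A.det := isUnit_iff_ne_zero.mpr hA.det_pos.ne'
  have hAinv : A *ᵥ (A⁻¹ *ᵥ b) = b := by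
    rw [Matrix.mulVec_mulVec, Matrix.mul_nonsing_inv A hdet, Matrix.one_mulVec]
  rw [Matrix.mulVec_neg, dotProduct_neg, neg_dotProduct, dotProduct_neg,
    hAinv, dotProduct_comm b]
  ring

lemma scalar_le (c a dv : ℝ) (hc : 0 < c) (ha : 0 < a) (hdv : 0 < dv) :
    Real.exp (-(1/2) * (dv⁻¹ * c)) * dv ^ (-a/2) ≤
      Real.exp (-(1/2) * ((c/a)⁻¹ * c)) * (c/a) ^ (-a/2) := by
  have hca : 0 < c / a := div_pos hc ha
  rw [Real.rpow_def_of_pos hdv, Real.rpow_def_of_pos hca, ← Real.exp_add, ← Real.exp_add]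
  apply Real.exp_le_exp.2
  have ht : 0 < c / (a * dv) := div_pos hc (mul_pos ha hdv)
  have hlog := Real.log_le_sub_one_of_pos ht
  have hlogeq : Real.log (c / (a * dv)) = Real.log (c/a) - Real.log dv := by
    rw [show c / (a * dv) = (c/a) / dv by ring, Real.log_div hca.ne' hdv.ne']
  have hce : (c/a)⁻¹ * c = a := by field_simp
  rw [hce]
  rw [hlogeq] at hlog
  have h3 : a * (c / (a * dv)) = dv⁻¹ * c := by field_simp
  nlinarith [mul_le_mul_of_nonneg_left hlog (le_of_lt (half_pos ha))]

lemma trace_decomp {p : ℕ} (d : Fin p → ℝ) (L U : Matrix (Fin p) (Fin p) ℝ) :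
    ((L * Matrix.diagonal (fun i => (d i)⁻¹) * Lᵀ) * U).trace
      = ∑ k : Fin p, (d k)⁻¹ * ((fun j => L j k) ⬝ᵥ U *ᵥ (fun j => L j k)) := by
  rw [Matrix.trace_mul_comm]
  simp only [← Matrix.mul_assoc]
  rw [Matrix.trace_mul_comm]
  simp only [← Matrix.mul_assoc]
  simp only [Matrix.trace, Matrix.diag, Matrix.mul_apply, Matrix.diagonal_apply,
    Matrix.transpose_apply, mul_ite, mul_zero, Finset.sum_ite_eq, Finset.sum_ite_eq',
    Finset.mem_univ, if_true,
    dotProduct, Matrix.mulVec, Finset.sum_mul, Finset.mul_sum]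
  refine Finset.sum_congr rfl fun k _ => ?_
  rw [Finset.sum_comm]
  refine Finset.sum_congr rfl fun i _ => ?_
  refine Finset.sum_congr rfl fun j _ => ?_
  ring

lemma quad_form_eq {p : ℕ} (pa : Fin p → Finset (Fin p))
    (hpa : ∀ i : Fin p, ∀ j ∈ pa i, i < j)
    (U : Matrix (Fin p) (Fin p) ℝ) (hU : Uᵀ = U) (k : Fin p)
    (v : Fin p → ℝ) (hvk : v k = 1) (hv0 : ∀ j, j ≠ k → j ∉ pa k → v j = 0) :
    v ⬝ᵥ U *ᵥ v = U k k + 2 * (colv pa U k ⬝ᵥ (fun j => v j.1))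
      + (fun j => v j.1) ⬝ᵥ sub2 pa U k *ᵥ (fun j => v j.1) := by
  have hknot : k ∉ pa k := fun h => lt_irrefl k (hpa k k h)
  have hUsym : ∀ i j, U i j = U j i := fun i j => by
    simpa using congrFun (congrFun hU j) i
  have step1 : v ⬝ᵥ U *ᵥ v
      = ∑ i ∈ insert k (pa k), ∑ j ∈ insert k (pa k), v i * (U i j * v j) := by
    simp only [dotProduct, Matrix.mulVec, Finset.mul_sum]
    rw [← Finset.sum_subset (Finset.subset_univ (insert k (pa k)))]
    · refine Finset.sum_congr rfl fun i _ => ?_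
      rw [← Finset.sum_subset (Finset.subset_univ (insert k (pa k)))]
      intro j _ hj
      simp only [Finset.mem_insert, not_or] at hj
      rw [hv0 j hj.1 hj.2, mul_zero, mul_zero]
    · intro i _ hi
      simp only [Finset.mem_insert, not_or] at hi
      rw [hv0 i hi.1 hi.2]
      simp
  rw [step1]
  rw [Finset.sum_insert hknot, Finset.sum_insert hknot]
  have hsub : ∀ i ∈ pa k, ∑ j ∈ insert k (pa k), v i * (U i j * v j)
      = v i * (U i k * v k) + ∑ j ∈ pa k, v i * (U i j * v j) :=
    fun i _ => Finset.sum_insert hknot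
  rw [Finset.sum_congr rfl hsub, Finset.sum_add_distrib, hvk]
  have e1 : ∑ j ∈ pa k, 1 * (U k j * v j)
      = colv pa U k ⬝ᵥ (fun j : {j // j ∈ pa k} => v j.1) := by
    simp only [dotProduct, colv]
    rw [← Finset.sum_coe_sort (pa k) (fun j => 1 * (U k j * v j))]
    exact Finset.sum_congr rfl fun j _ => by rw [hUsym k j.1]; ring
  have e2 : ∑ i ∈ pa k, v i * (U i k * 1)
      = colv pa U k ⬝ᵥ (fun j : {j // j ∈ pa k} => v j.1) := by
    simp only [dotProduct, colv]
    rw [← Finset.sum_coe_sort (pa k) (fun i => v i * (U i k * 1))]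
    exact Finset.sum_congr rfl fun j _ => by ring
  have e3 : ∑ i ∈ pa k, ∑ j ∈ pa k, v i * (U i j * v j)
      = (fun j : {j // j ∈ pa k} => v j.1) ⬝ᵥ sub2 pa U k *ᵥ (fun j : {j // j ∈ pa k} => v j.1) := by
    simp only [dotProduct, Matrix.mulVec, sub2, Matrix.submatrix_apply, Finset.mul_sum]
    rw [← Finset.sum_coe_sort (pa k) (fun i => ∑ j ∈ pa k, v i * (U i j * v j))]
    refine Finset.sum_congr rfl fun i _ => ?_
    rw [← Finset.sum_coe_sort (pa k) (fun j => v i.1 * (U i.1 j * v j))]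
  rw [e1, e2, e3]
  ring

end AuxLemmas
/-- the mode of the (unnormalized) DAG-Wishart density is attained at
`D*_{ii} = U_{ii|<i>}/α_i`, `L*_{<i|} = -(U_{<i>})⁻¹ U_{<i|}`. -/
theorem stmt7 {p : ℕ} (hp : 1 ≤ p) (pa : Fin p → Finset (Fin p))
    (hpa : ∀ i : Fin p, ∀ j ∈ pa i, i < j)
    (U : Matrix (Fin p) (Fin p) ℝ) (hU : U.PosDef) (α : Fin p → ℝ)
    (hα : ∀ i : Fin p, α i > ((pa i).card : ℝ) + 2)
    (d : Fin p → ℝ) (hd : ∀ i, 0 < d i)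
    (L : Matrix (Fin p) (Fin p) ℝ) (hL1 : ∀ i, L i i = 1)
    (hL0 : ∀ i j : Fin p, j ≠ i → j ∉ pa i → L j i = 0) :
    dagDensity pa U α d L ≤
      dagDensity pa U α (fun i => condVar pa U i / α i)
        (Matrix.of fun j i =>
          if j = i then 1
          else if h : j ∈ pa i then (-((sub2 pa U i)⁻¹ *ᵥ colv pa U i)) ⟨j, h⟩
          else 0) := by
  classical
  set Lstar : Matrix (Fin p) (Fin p) ℝ := Matrix.of fun j i =>
    if j = i then 1
    else if h : j ∈ pa i then (-((sub2 pa U i)⁻¹ *ᵥ colv pa U i)) ⟨j, h⟩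
    else 0 with hLstar
  have hUsym : Uᵀ = U := by
    have := hU.1
    exact (by simpa using this : U.IsSymm).eq
  have hαpos : ∀ k, 0 < α k := by
    intro k
    have h1 := hα k
    have h2 : (0:ℝ) ≤ ((pa k).card : ℝ) := Nat.cast_nonneg _
    linarith
  have hApd : ∀ k, (sub2 pa U k).PosDef := fun k =>
    posDef_submatrix_inj hU _ Subtype.val_injective
  have hrowcol : ∀ k, rowv pa U k = colv pa U k := by
    intro k
    funext j
    simp only [rowv, colv]
    simpa using congrFun (congrFun hUsym j.1) k
  have hcond : ∀ k, condVar pa U k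
      = U k k + -(colv pa U k ⬝ᵥ (sub2 pa U k)⁻¹ *ᵥ colv pa U k) := by
    intro k
    rw [condVar, hrowcol]
    ring
  -- star column facts
  have hLstar1 : ∀ k : Fin p, Lstar k k = 1 := by
    intro k
    simp [hLstar]
  have hLstar0 : ∀ k j : Fin p, j ≠ k → j ∉ pa k → Lstar j k = 0 := by
    intro k j h1 h2
    simp [hLstar, h1, h2]
  have hystar : ∀ k : Fin p, (fun j : {j // j ∈ pa k} => Lstar j.1 k)
      = -((sub2 pa U k)⁻¹ *ᵥ colv pa U k) := by
    intro k
    funext j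
    have hjk : j.1 ≠ k := by
      intro h
      have hlt := hpa k j.1 j.2
      rw [h] at hlt
      exact lt_irrefl k hlt
    show Lstar j.1 k = _
    rw [hLstar]
    show (if j.1 = k then 1 else if h : j.1 ∈ pa k then (-((sub2 pa U k)⁻¹ *ᵥ colv pa U k)) ⟨j.1, h⟩ else 0) = _
    rw [if_neg hjk, dif_pos j.2]
  have hstarcol : ∀ k : Fin p,
      (fun j => Lstar j k) ⬝ᵥ U *ᵥ (fun j => Lstar j k) = condVar pa U k := by
    intro k
    rw [quad_form_eq pa hpa U hUsym k (fun j => Lstar j k) (hLstar1 k) (hLstar0 k), hystar k, hcond k]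
    have := quad_eq (hApd k) (colv pa U k)
    linarith [this]
  have hcpos : ∀ k, 0 < condVar pa U k := by
    intro k
    rw [← hstarcol k]
    have hne : (fun j => Lstar j k) ≠ 0 := by
      intro h0
      have := congrFun h0 k
      rw [hLstar1 k] at this
      simpa using this
    have := hU.dotProduct_mulVec_pos hne
    simpa using this
  have hq : ∀ k, condVar pa U k ≤ (fun j => L j k) ⬝ᵥ U *ᵥ (fun j => L j k) := by
    intro k
    rw [quad_form_eq pa hpa U hUsym k (fun j => L j k) (hL1 k) (fun j h1 h2 => hL0 k j h1 h2), hcond k]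
    have := quad_expand (hApd k) (colv pa U k) (fun j : {j // j ∈ pa k} => L j.1 k)
    linarith [this]
  rw [dagDensity, dagDensity, trace_decomp, trace_decomp,
    Finset.mul_sum, Finset.mul_sum, Real.exp_sum, Real.exp_sum,
    ← Finset.prod_mul_distrib, ← Finset.prod_mul_distrib]
  apply Finset.prod_le_prod
  · intro k _
    have h1 := hd k
    positivity
  · intro k _
    rw [hstarcol k]
    calc Real.exp (-(1 / 2) * ((d k)⁻¹ * ((fun j => L j k) ⬝ᵥ U *ᵥ (fun j => L j k))))
          * d k ^ (-(α k) / 2)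
        ≤ Real.exp (-(1 / 2) * ((d k)⁻¹ * condVar pa U k)) * d k ^ (-(α k) / 2) := by
          apply mul_le_mul_of_nonneg_right
          · apply Real.exp_le_exp.2
            have h1 : 0 < (d k)⁻¹ := inv_pos.2 (hd k)
            nlinarith [hq k]
          · exact Real.rpow_nonneg (hd k).le _
      _ ≤ Real.exp (-(1 / 2) * ((condVar pa U k / α k)⁻¹ * condVar pa U k))
          * (condVar pa U k / α k) ^ (-(α k) / 2) :=
          scalar_le (condVar pa U k) (α k) (d k) (hcpos k) (hαpos k) (hd k)


end
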